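/- Let R be a commutative ring, I ⊆ R an ideal, g ∈ R, and X an indeterminate over R. Then X·g is a zerodivisor on R[X]/I·R[X] if and only if g is a zerodivisor on R/I. -/

import Mathlib

/-- `X·g` is a zerodivisor on `R[X]/I·R[X]` iff `g` is a zerodivisor on `R/I`. -/
theorem xg_zerodivisor_iff {R : Type*} [CommRing R] (I : Ideal R) (g : R) :
    (∃ h : Polynomial R ⧸ I.map (Polynomial.C : R →+* Polynomial R), h ≠ 0 ∧
      Ideal.Quotient.mk (I.map (Polynomial.C : R →+* Polynomial R))
        (Polynomial.X * Polynomial.C g) * h = 0) ↔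
    (∃ r : R ⧸ I, r ≠ 0 ∧ Ideal.Quotient.mk I g * r = 0) := by
  set e := Ideal.polynomialQuotientEquivQuotientPolynomial I with he
  have key : Ideal.Quotient.mk (I.map (Polynomial.C : R →+* Polynomial R))
      (Polynomial.X * Polynomial.C g)
      = e (Polynomial.X * Polynomial.C (Ideal.Quotient.mk I g)) := by
    rw [← Ideal.polynomialQuotientEquivQuotientPolynomial_map_mk I
      (Polynomial.X * Polynomial.C g)]
    simp [Polynomial.map_mul, he]
  constructor
  · rintro ⟨h, hne, hmul⟩
    obtain ⟨p, rfl⟩ := e.surjective h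
    have hp : p ≠ 0 := by rintro rfl; simp at hne
    have h0 : Polynomial.X * Polynomial.C (Ideal.Quotient.mk I g) * p = 0 := by
      apply e.injective
      rw [map_mul, ← key, map_zero]
      exact hmul
    have h1 : Polynomial.C (Ideal.Quotient.mk I g) * p = 0 := by
      ext n
      have := congrArg (fun q => Polynomial.coeff q (n + 1)) h0
      simpa [mul_assoc, Polynomial.coeff_X_mul] using this
    obtain ⟨n, hn⟩ : ∃ n, p.coeff n ≠ 0 := by
      by_contra hc
      push_neg at hc
      exact hp (Polynomial.ext fun n => by simp [hc n])
    refine ⟨p.coeff n, hn, ?_⟩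
    have := congrArg (fun q => Polynomial.coeff q n) h1
    simpa [Polynomial.coeff_C_mul] using this
  · rintro ⟨r, hr, hgr⟩
    refine ⟨e (Polynomial.C r), ?_, ?_⟩
    · simp only [ne_eq, EmbeddingLike.map_eq_zero_iff, Polynomial.C_eq_zero]
      exact hr
    · rw [key, ← map_mul, mul_assoc, ← Polynomial.C_mul, hgr]
      simp
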